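/- Suppose each f_i is L-smooth and μ-strongly convex, client i performs τ_i ≥ 1 local FedLin steps per round with client-specific step size η_i = 1/(6Lτ_i), and there is no compression. Then after T rounds, f(x̄_{T+1}) - f(x*) ≤ (1 - 1/(6κ))^T (f(x̄₁) - f(x*)), where κ = L/μ and x* minimizes f = (1/m)∑f_i; in particular the rate is independent of the τ_i. -/

import Mathlib

open Finset RealInnerProductSpace

section Aux
variable {E : Type*} [NormedAddCommGroup E] [InnerProductSpace ℝ E] [CompleteSpace E]

lemma fedlin_line_hasDerivAt (f : E → ℝ) (hf : Differentiable ℝ f) (x v : E) (t : ℝ) :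
    HasDerivAt (fun s : ℝ => f (x + s • v)) ⟪gradient f (x + t • v), v⟫ t := by
  have hpath : HasDerivAt (fun s : ℝ => x + s • v) v t := by
    simpa using (hasDerivAt_id t).smul_const v
  have hfd := ((hf (x + t • v)).hasFDerivAt).comp_hasDerivAt t hpath
  have : (fderiv ℝ f (x + t • v)) v = ⟪gradient f (x + t • v), v⟫ := by
    rw [gradient, ← InnerProductSpace.toDual_apply_apply,
      LinearIsometryEquiv.apply_symm_apply]
  rw [this] at hfd; exact hfd

lemma fedlin_descent (f : E → ℝ) (hf : Differentiable ℝ f) (L : ℝ) (hL : 0 ≤ L)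
    (hlip : ∀ a b : E, ‖gradient f a - gradient f b‖ ≤ L * ‖a - b‖) (x y : E) :
    f y ≤ f x + ⟪gradient f x, y - x⟫ + L / 2 * ‖y - x‖ ^ 2 := by
  set v := y - x with hv
  have hcont : Continuous (gradient f) := by
    refine (LipschitzWith.of_dist_le_mul (K := L.toNNReal) ?_).continuous
    intro a b
    simpa [dist_eq_norm, Real.coe_toNNReal L hL] using hlip a b
  have hcg : Continuous fun t : ℝ => ⟪gradient f (x + t • v), v⟫ := by
    exact (hcont.comp (by continuity)).inner continuous_const
  have hFTC : f y - f x = ∫ t in (0:ℝ)..1, ⟪gradient f (x + t • v), v⟫ := by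
    have := intervalIntegral.integral_eq_sub_of_hasDerivAt
      (f := fun s : ℝ => f (x + s • v))
      (f' := fun t : ℝ => ⟪gradient f (x + t • v), v⟫)
      (a := 0) (b := 1)
      (fun t _ => fedlin_line_hasDerivAt f hf x v t)
      (hcg.intervalIntegrable 0 1)
    rw [this]; simp [hv]
  have hbound : ∀ t ∈ Set.Icc (0:ℝ) 1,
      ⟪gradient f (x + t • v), v⟫ ≤ ⟪gradient f x, v⟫ + L * t * ‖v‖ ^ 2 := by
    intro t ht
    have h1 : ⟪gradient f (x + t • v) - gradient f x, v⟫ ≤ L * t * ‖v‖ ^ 2 := by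
      calc ⟪gradient f (x + t • v) - gradient f x, v⟫
          ≤ ‖gradient f (x + t • v) - gradient f x‖ * ‖v‖ := real_inner_le_norm _ _
        _ ≤ (L * ‖(x + t • v) - x‖) * ‖v‖ := by
            have := hlip (x + t • v) x
            nlinarith [norm_nonneg v]
        _ = L * t * ‖v‖ ^ 2 := by
            rw [show (x + t • v) - x = t • v by abel, norm_smul]
            simp [abs_of_nonneg ht.1]; ring
    have := inner_sub_left (𝕜 := ℝ) (gradient f (x + t • v)) (gradient f x) v
    linarith [h1, this.symm.le, this.le]
  have hint : (∫ t in (0:ℝ)..1, ⟪gradient f (x + t • v), v⟫)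
      ≤ ∫ t in (0:ℝ)..1, (⟪gradient f x, v⟫ + L * t * ‖v‖ ^ 2) := by
    refine intervalIntegral.integral_mono_on (by norm_num)
      (hcg.intervalIntegrable 0 1) ?_ hbound
    exact (Continuous.intervalIntegrable (by continuity) 0 1)
  have hval : (∫ t in (0:ℝ)..1, (⟪gradient f x, v⟫ + L * t * ‖v‖ ^ 2))
      = ⟪gradient f x, v⟫ + L / 2 * ‖v‖ ^ 2 := by
    rw [intervalIntegral.integral_add (intervalIntegrable_const)
      (Continuous.intervalIntegrable (by continuity) 0 1)]
    have : ∀ t : ℝ, L * t * ‖v‖ ^ 2 = (L * ‖v‖ ^ 2) * t := fun t => by ring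
    simp only [this]
    rw [intervalIntegral.integral_const_mul, integral_id]
    norm_num; ring
  linarith [hFTC, hint, hval.le, hval.ge]

lemma fedlin_pow_bound (n : ℕ) (hn : 1 ≤ n) :
    (1 + 1 / (6 * (n : ℝ))) ^ n ≤ 6 / 5 := by
  have hn0 : (0:ℝ) < n := by exact_mod_cast hn
  have hx : (0:ℝ) ≤ 1 / (6 * n) := by positivity
  have h1 : (1 + 1 / (6 * (n:ℝ))) ^ n ≤ Real.exp (1 / (6 * n)) ^ n := by
    apply pow_le_pow_left₀ (by linarith)
    linarith [Real.add_one_le_exp (1 / (6 * (n:ℝ)))]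
  have h2 : Real.exp (1 / (6 * (n:ℝ))) ^ n = Real.exp (1/6) := by
    rw [← Real.exp_nat_mul]
    congr 1; field_simp
  have h3 : Real.exp (1/6 : ℝ) ≤ 6/5 := by
    have := Real.add_one_le_exp (-(1/6) : ℝ)
    have hp := Real.exp_pos (1/6 : ℝ)
    rw [Real.exp_neg] at this
    rw [show (6:ℝ)/5 = (5/6)⁻¹ by norm_num, ← inv_inv (Real.exp (1/6))]
    apply inv_anti₀ (by norm_num)
    linarith
  calc _ ≤ Real.exp (1 / (6 * (n:ℝ))) ^ n := h1
    _ = Real.exp (1/6) := h2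
    _ ≤ 6/5 := h3

end Aux

set_option maxHeartbeats 2000000 in
/-- Theorem 3 (strongly convex case with systems heterogeneity): FedLin with
client-specific numbers of local steps `τᵢ ≥ 1` and step sizes `ηᵢ = 1/(6Lτᵢ)`
converges linearly to the global minimum at a rate independent of the `τᵢ`. -/
theorem fedlin_linear_convergence_systems_heterogeneity {d m : ℕ} (hm : 0 < m)
    (f : Fin m → EuclideanSpace ℝ (Fin d) → ℝ)
    (F : EuclideanSpace ℝ (Fin d) → ℝ)
    (hF : ∀ z, F z = (1 / (m : ℝ)) * ∑ i, f i z)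
    (L μ : ℝ) (hL : 0 < L) (hμ : 0 < μ)
    (hdiff : ∀ i, Differentiable ℝ (f i))
    (hsmooth : ∀ i, LipschitzWith L.toNNReal (gradient (f i)))
    (hstrong : ∀ i, ∀ x y : EuclideanSpace ℝ (Fin d),
      f i y - f i x ≥ ⟪y - x, gradient (f i) x⟫ + μ / 2 * ‖y - x‖ ^ 2)
    (τ : Fin m → ℕ) (hτ : ∀ i, 1 ≤ τ i)
    (η : Fin m → ℝ) (hη : ∀ i, η i = 1 / (6 * L * (τ i : ℝ)))
    (xbar : ℕ → EuclideanSpace ℝ (Fin d))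
    (x : ℕ → Fin m → ℕ → EuclideanSpace ℝ (Fin d))
    (hx0 : ∀ t, 1 ≤ t → ∀ i, x t i 0 = xbar t)
    (hrec : ∀ t, 1 ≤ t → ∀ i, ∀ ℓ < τ i, x t i (ℓ + 1) =
      x t i ℓ - η i • (gradient (f i) (x t i ℓ) - gradient (f i) (xbar t)
        + gradient F (xbar t)))
    (havg : ∀ t, 1 ≤ t → xbar (t + 1) = (1 / (m : ℝ)) • ∑ i, x t i (τ i))
    (xstar : EuclideanSpace ℝ (Fin d)) (hmin : ∀ z, F xstar ≤ F z)
    (T : ℕ) :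
    F (xbar (T + 1)) - F xstar ≤
      (1 - 1 / (6 * (L / μ))) ^ T * (F (xbar 1) - F xstar) := by
  rcases Nat.eq_zero_or_pos d with hd | hd
  · subst hd
    have e1 : xbar (T+1) = xstar := Subsingleton.elim _ _
    have e2 : xbar 1 = xstar := Subsingleton.elim _ _
    rw [e1, e2]; simp
  have hm0 : (0:ℝ) < m := by exact_mod_cast hm
  -- Lipschitz gradients in norm form
  have hLip : ∀ i (a b : EuclideanSpace ℝ (Fin d)),
      ‖gradient (f i) a - gradient (f i) b‖ ≤ L * ‖a - b‖ := by
    intro i a b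
    have := (hsmooth i).dist_le_mul a b
    simpa [dist_eq_norm, Real.coe_toNNReal L hL.le] using this
  -- gradient of F
  have hgradF : ∀ z, gradient F z = (1/(m:ℝ)) • ∑ i, gradient (f i) z := by
    intro z
    have hFe : F = fun z => (1/(m:ℝ)) * ∑ i, f i z := funext hF
    have h1 : HasFDerivAt F ((1/(m:ℝ)) • ∑ i, fderiv ℝ (f i) z) z := by
      rw [hFe]
      exact (HasFDerivAt.fun_sum (fun i _ => (hdiff i z).hasFDerivAt)).const_mul _
    have h2 := h1.hasGradientAt
    rw [h2.gradient, map_smul, map_sum]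
    rfl
  -- F is differentiable
  have hFdiff : Differentiable ℝ F := by
    have hFe : F = fun z => (1/(m:ℝ)) * ∑ i, f i z := funext hF
    rw [hFe]
    exact Differentiable.const_mul (Differentiable.fun_sum (fun i _ => hdiff i)) _
  -- gradient of F is L-Lipschitz
  have hFlip : ∀ a b : EuclideanSpace ℝ (Fin d),
      ‖gradient F a - gradient F b‖ ≤ L * ‖a - b‖ := by
    intro a b
    rw [hgradF a, hgradF b, ← smul_sub, ← Finset.sum_sub_distrib, norm_smul]
    have hsum : ‖∑ i, (gradient (f i) a - gradient (f i) b)‖ ≤ (m:ℝ) * (L * ‖a - b‖) := by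
      refine le_trans (norm_sum_le _ _) ?_
      rw [show (m:ℝ) * (L * ‖a - b‖) = ∑ _i : Fin m, (L * ‖a - b‖) by
        rw [Finset.sum_const, card_univ]; simp [nsmul_eq_mul]]
      exact Finset.sum_le_sum fun i _ => hLip i a b
    rw [Real.norm_eq_abs, abs_of_pos (by positivity)]
    calc (1/(m:ℝ)) * ‖∑ i, (gradient (f i) a - gradient (f i) b)‖
        ≤ (1/(m:ℝ)) * ((m:ℝ) * (L * ‖a - b‖)) :=
          mul_le_mul_of_nonneg_left hsum (by positivity)
      _ = L * ‖a - b‖ := by field_simp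
  -- strong convexity of F
  have hFstrong : ∀ a b : EuclideanSpace ℝ (Fin d),
      F b - F a ≥ ⟪b - a, gradient F a⟫ + μ / 2 * ‖b - a‖ ^ 2 := by
    intro a b
    have hsum : ∑ i, (f i b - f i a) ≥
        ∑ i, (⟪b - a, gradient (f i) a⟫ + μ / 2 * ‖b - a‖ ^ 2) :=
      Finset.sum_le_sum fun i _ => hstrong i a b
    have hinner : ⟪b - a, gradient F a⟫ = (1/(m:ℝ)) * ∑ i, ⟪b - a, gradient (f i) a⟫ := by
      rw [hgradF a, inner_smul_right, inner_sum]
    have hFb : F b - F a = (1/(m:ℝ)) * ∑ i, (f i b - f i a) := by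
      rw [hF a, hF b, ← mul_sub, ← Finset.sum_sub_distrib]
    rw [hFb, hinner]
    rw [Finset.sum_add_distrib, Finset.sum_const, card_univ] at hsum
    have : (1/(m:ℝ)) * ∑ i, (f i b - f i a) ≥
        (1/(m:ℝ)) * (∑ i, ⟪b - a, gradient (f i) a⟫ + (m:ℝ) * (μ / 2 * ‖b - a‖ ^ 2)) := by
      apply mul_le_mul_of_nonneg_left _ (by positivity)
      simpa [nsmul_eq_mul] using hsum
    calc (1/(m:ℝ)) * ∑ i, (f i b - f i a)
        ≥ (1/(m:ℝ)) * (∑ i, ⟪b - a, gradient (f i) a⟫ + (m:ℝ) * (μ / 2 * ‖b - a‖ ^ 2)) := this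
      _ = (1/(m:ℝ)) * ∑ i, ⟪b - a, gradient (f i) a⟫ + μ / 2 * ‖b - a‖ ^ 2 := by
          field_simp
  -- PL inequality
  have hPL : ∀ z, 2 * μ * (F z - F xstar) ≤ ‖gradient F z‖ ^ 2 := by
    intro z
    have h1 := hFstrong z xstar
    have h2 : ⟪xstar - z, gradient F z⟫ ≥ -(‖gradient F z‖ * ‖xstar - z‖) := by
      have := abs_real_inner_le_norm (xstar - z) (gradient F z)
      rw [abs_le] at this
      linarith [this.1, mul_comm ‖xstar - z‖ ‖gradient F z‖]
    nlinarith [sq_nonneg (μ * ‖xstar - z‖ - ‖gradient F z‖), hμ, norm_nonneg (xstar - z),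
      norm_nonneg (gradient F z)]
  -- μ ≤ L
  have hμL : μ ≤ L := by
    set i0 : Fin m := ⟨0, hm⟩
    set u : EuclideanSpace ℝ (Fin d) := EuclideanSpace.single (⟨0, hd⟩ : Fin d) (1:ℝ) with hu
    have hnu : ‖u‖ = 1 := by rw [hu, EuclideanSpace.norm_single]; norm_num
    have h1 := hstrong i0 0 u
    have h2 := hstrong i0 u 0
    have h3 := hLip i0 u 0
    have h4 := real_inner_le_norm (u - 0) (gradient (f i0) u - gradient (f i0) 0)
    rw [inner_sub_right] at h4
    simp only [sub_zero] at h1 h2 h3 h4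
    rw [zero_sub, inner_neg_left, norm_neg, hnu] at h2
    rw [hnu] at h1 h3 h4
    nlinarith [h1, h2, h3, h4]
  -- the key per-round contraction
  have key : ∀ t, 1 ≤ t →
      F (xbar (t+1)) - F xstar ≤ (1 - μ/(6*L)) * (F (xbar t) - F xstar) := by
    intro t ht
    set p := xbar t with hp
    set g := gradient F p with hg
    have hG0 : (0:ℝ) ≤ ‖g‖ := norm_nonneg _
    have hτ0 : ∀ i, (0:ℝ) < (τ i : ℝ) := fun i => by exact_mod_cast hτ i
    have hηpos : ∀ i, 0 < η i := fun i => by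
      rw [hη i]
      exact div_pos one_pos (mul_pos (mul_pos (by norm_num) hL) (hτ0 i))
    have hηL : ∀ i, η i * L = 1 / (6 * (τ i : ℝ)) := fun i => by
      rw [hη i]; field_simp [hL.ne', (hτ0 i).ne']
    have hητ : ∀ i, η i * (τ i : ℝ) = 1 / (6 * L) := fun i => by
      rw [hη i]; field_simp [hL.ne', (hτ0 i).ne']
    have hmm : (1/(m:ℝ)) * (m:ℝ) = 1 := by field_simp
    -- drift bound
    have hdrift : ∀ i, ∀ ℓ, ℓ ≤ τ i →
        L * ‖x t i ℓ - p‖ ≤ ((1 + η i * L) ^ ℓ - 1) * ‖g‖ := by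
      intro i ℓ
      induction ℓ with
      | zero => intro _; rw [hx0 t ht i]; simp [hp]
      | succ n ihn =>
        intro hn1
        have hnτ : n < τ i := hn1
        have ihn' := ihn (le_of_lt hnτ)
        rw [hrec t ht i n hnτ]
        have hA : ‖gradient (f i) (x t i n) - gradient (f i) p + g‖
            ≤ L * ‖x t i n - p‖ + ‖g‖ := by
          refine le_trans (norm_add_le _ _) (add_le_add (hLip i _ _) le_rfl)
        have hnorm : ‖x t i n - η i • (gradient (f i) (x t i n) - gradient (f i) p + g) - p‖
            ≤ ‖x t i n - p‖ + η i * (L * ‖x t i n - p‖ + ‖g‖) := by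
          have e1 : x t i n - η i • (gradient (f i) (x t i n) - gradient (f i) p + g) - p
              = (x t i n - p) + (-(η i • (gradient (f i) (x t i n) - gradient (f i) p + g))) := by
            abel
          rw [e1]
          refine le_trans (norm_add_le _ _) ?_
          rw [norm_neg, norm_smul, Real.norm_eq_abs, abs_of_pos (hηpos i)]
          exact add_le_add le_rfl (mul_le_mul_of_nonneg_left hA (hηpos i).le)
        have hpow : (1 + η i * L) ^ (n+1) = (1 + η i * L) ^ n * (1 + η i * L) :=
          pow_succ _ _
        have ha : 0 < η i * L := mul_pos (hηpos i) hL
        have hP : 1 ≤ (1 + η i * L) ^ n := one_le_pow₀ (by linarith)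
        calc L * ‖x t i n - η i • (gradient (f i) (x t i n) - gradient (f i) p + g) - p‖
            ≤ L * (‖x t i n - p‖ + η i * (L * ‖x t i n - p‖ + ‖g‖)) :=
              mul_le_mul_of_nonneg_left hnorm hL.le
          _ = (1 + η i * L) * (L * ‖x t i n - p‖) + (η i * L) * ‖g‖ := by ring
          _ ≤ (1 + η i * L) * (((1 + η i * L) ^ n - 1) * ‖g‖) + (η i * L) * ‖g‖ :=
              add_le_add (mul_le_mul_of_nonneg_left ihn' (by linarith)) le_rfl
          _ = ((1 + η i * L) ^ (n+1) - 1) * ‖g‖ := by rw [hpow]; ring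
    -- cap on the drift
    have hcap : ∀ i, ∀ ℓ, ℓ ≤ τ i → L * ‖x t i ℓ - p‖ ≤ ‖g‖ / 5 := by
      intro i ℓ hℓ
      have h1 := hdrift i ℓ hℓ
      have ha : 0 < η i * L := mul_pos (hηpos i) hL
      have hb : (1 + η i * L) ^ ℓ ≤ 6/5 := by
        calc (1 + η i * L) ^ ℓ ≤ (1 + η i * L) ^ (τ i) :=
              pow_le_pow_right₀ (by linarith) hℓ
          _ ≤ 6/5 := by rw [hηL i]; exact fedlin_pow_bound (τ i) (hτ i)
      calc L * ‖x t i ℓ - p‖ ≤ ((1 + η i * L) ^ ℓ - 1) * ‖g‖ := h1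
        _ ≤ (6/5 - 1) * ‖g‖ := mul_le_mul_of_nonneg_right (by linarith) hG0
        _ = ‖g‖ / 5 := by ring
    -- telescoping
    have htel : ∀ i, ∀ k, k ≤ τ i → x t i k = p - η i •
        ∑ ℓ ∈ Finset.range k, (gradient (f i) (x t i ℓ) - gradient (f i) p + g) := by
      intro i k
      induction k with
      | zero => intro _; simp [hx0 t ht i, hp]
      | succ n ihn =>
        intro hn1
        rw [hrec t ht i n hn1]
        nth_rewrite 1 [ihn (le_of_lt hn1)]
        rw [Finset.sum_range_succ, smul_add, sub_sub, ← hp, ← hg, ← smul_add,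
          ← smul_add]
    -- decomposition of the averaged iterate
    set S : Fin m → EuclideanSpace ℝ (Fin d) :=
      fun i => ∑ ℓ ∈ Finset.range (τ i), (gradient (f i) (x t i ℓ) - gradient (f i) p)
      with hS
    have hxi : ∀ i, x t i (τ i) = p - (1/(6*L)) • g - η i • S i := by
      intro i
      rw [htel i (τ i) le_rfl]
      have e1 : ∑ ℓ ∈ Finset.range (τ i),
            (gradient (f i) (x t i ℓ) - gradient (f i) p + g)
          = S i + ((τ i : ℝ)) • g := by
        rw [Finset.sum_add_distrib, Finset.sum_const, Finset.card_range, hS,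
          ← Nat.cast_smul_eq_nsmul ℝ]
      rw [e1, smul_add, smul_smul, hητ i]
      abel
    have hxbar : xbar (t+1) = p - (1/(6*L)) • g - (1/(m:ℝ)) • ∑ i, η i • S i := by
      calc xbar (t+1) = (1/(m:ℝ)) • ∑ i, (p - (1/(6*L)) • g - η i • S i) := by
            rw [havg t ht]; simp only [hxi]
        _ = (1/(m:ℝ)) • ((m:ℝ) • (p - (1/(6*L)) • g) - ∑ i, η i • S i) := by
            rw [Finset.sum_sub_distrib, Finset.sum_const, card_univ, Fintype.card_fin,
              ← Nat.cast_smul_eq_nsmul ℝ]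
        _ = p - (1/(6*L)) • g - (1/(m:ℝ)) • ∑ i, η i • S i := by
            rw [smul_sub, smul_smul, hmm, one_smul]
    set EE : EuclideanSpace ℝ (Fin d) := (1/(m:ℝ)) • ∑ i, η i • S i with hEE
    -- error bound
    have hSnorm : ∀ i, ‖η i • S i‖ ≤ ‖g‖ / (30*L) := by
      intro i
      have h1 : ‖S i‖ ≤ (τ i : ℝ) * (‖g‖/5) := by
        rw [hS]
        refine le_trans (norm_sum_le _ _) ?_
        calc ∑ ℓ ∈ Finset.range (τ i), ‖gradient (f i) (x t i ℓ) - gradient (f i) p‖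
            ≤ ∑ _ℓ ∈ Finset.range (τ i), (‖g‖/5) := by
              refine Finset.sum_le_sum fun ℓ hℓ => ?_
              have hℓ' : ℓ ≤ τ i := le_of_lt (Finset.mem_range.mp hℓ)
              have := hcap i ℓ hℓ'
              have := hLip i (x t i ℓ) p
              linarith
          _ = (τ i : ℝ) * (‖g‖/5) := by
              rw [Finset.sum_const, Finset.card_range, nsmul_eq_mul]
      rw [norm_smul, Real.norm_eq_abs, abs_of_pos (hηpos i)]
      calc η i * ‖S i‖ ≤ η i * ((τ i : ℝ) * (‖g‖/5)) :=
            mul_le_mul_of_nonneg_left h1 (hηpos i).le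
        _ = (η i * (τ i : ℝ)) * (‖g‖/5) := by ring
        _ = ‖g‖ / (30*L) := by
            rw [hητ i, div_mul_div_comm, one_mul]; ring_nf
    have hEnorm : ‖EE‖ ≤ ‖g‖ / (30*L) := by
      rw [hEE, norm_smul, Real.norm_eq_abs, abs_of_pos (one_div_pos.mpr hm0)]
      calc (1/(m:ℝ)) * ‖∑ i, η i • S i‖ ≤ (1/(m:ℝ)) * ((m:ℝ) * (‖g‖/(30*L))) := by
            refine mul_le_mul_of_nonneg_left ?_ (by positivity)
            refine le_trans (norm_sum_le _ _) ?_
            rw [show (m:ℝ) * (‖g‖/(30*L)) = ∑ _i : Fin m, (‖g‖/(30*L)) by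
              rw [Finset.sum_const, card_univ, Fintype.card_fin, nsmul_eq_mul]]
            exact Finset.sum_le_sum fun i _ => hSnorm i
        _ = ‖g‖/(30*L) := by
            rw [← mul_assoc, hmm, one_mul]
    have hΔ : xbar (t+1) - p = -((1/(6*L)) • g) - EE := by
      rw [hxbar, hEE]; abel
    -- descent step
    have hdesc := fedlin_descent F hFdiff L hL.le hFlip p (xbar (t+1))
    rw [← hg] at hdesc
    have hinner : ⟪g, xbar (t+1) - p⟫ ≤ -((1/(6*L)) * ‖g‖^2) + ‖g‖ * (‖g‖/(30*L)) := by
      rw [hΔ, inner_sub_right, inner_neg_right, real_inner_smul_right,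
        real_inner_self_eq_norm_sq]
      have h2 : -⟪g, EE⟫ ≤ ‖g‖ * ‖EE‖ := by
        have := abs_real_inner_le_norm g EE
        rw [abs_le] at this
        linarith [this.1]
      have h3 : ‖g‖ * ‖EE‖ ≤ ‖g‖ * (‖g‖/(30*L)) := mul_le_mul_of_nonneg_left hEnorm hG0
      linarith
    have hΔnorm : ‖xbar (t+1) - p‖ ≤ ‖g‖/(5*L) := by
      rw [hΔ]
      calc ‖-((1/(6*L)) • g) - EE‖ ≤ ‖-((1/(6*L)) • g)‖ + ‖EE‖ := norm_sub_le _ _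
        _ ≤ (1/(6*L)) * ‖g‖ + ‖g‖/(30*L) := by
            rw [norm_neg, norm_smul, Real.norm_eq_abs,
              abs_of_pos (one_div_pos.mpr (by linarith : (0:ℝ) < 6*L))]
            exact add_le_add le_rfl hEnorm
        _ = ‖g‖/(5*L) := by field_simp [hL.ne']; ring
    have hsq : ‖xbar (t+1) - p‖^2 ≤ (‖g‖/(5*L))^2 := by
      have := pow_le_pow_left₀ (norm_nonneg _) hΔnorm 2
      simpa using this
    have hfin : F (xbar (t+1)) ≤ F p - (17/150) * (‖g‖^2 / L) := by
      have hq : L/2 * ‖xbar (t+1) - p‖^2 ≤ L/2 * (‖g‖/(5*L))^2 :=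
        mul_le_mul_of_nonneg_left hsq (by linarith)
      have e2 : F p + (-((1/(6*L)) * ‖g‖^2) + ‖g‖ * (‖g‖/(30*L))) + L/2 * (‖g‖/(5*L))^2
          = F p - (17/150) * (‖g‖^2 / L) := by
        field_simp [hL.ne']; ring
      calc F (xbar (t+1)) ≤ F p + ⟪g, xbar (t+1) - p⟫ + L/2 * ‖xbar (t+1) - p‖^2 := hdesc
        _ ≤ F p + (-((1/(6*L)) * ‖g‖^2) + ‖g‖ * (‖g‖/(30*L))) + L/2 * (‖g‖/(5*L))^2 := by
            exact add_le_add (add_le_add le_rfl hinner) hq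
        _ = F p - (17/150) * (‖g‖^2 / L) := e2
    -- contraction via PL
    have hPLp : 2 * μ * (F p - F xstar) ≤ ‖g‖^2 := hPL p
    have hpos : 0 ≤ F p - F xstar := sub_nonneg.mpr (hmin p)
    have hu : 2 * μ * (F p - F xstar) / L ≤ ‖g‖^2 / L :=
      (div_le_div_iff_of_pos_right hL).mpr hPLp
    have huG : (0:ℝ) ≤ ‖g‖^2 / L := div_nonneg (sq_nonneg _) hL.le
    have hring : (μ/(6*L)) * (F p - F xstar) = (1/12) * (2 * μ * (F p - F xstar) / L) := by
      ring
    have hgoalr : (1 - μ/(6*L)) * (F p - F xstar)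
        = (F p - F xstar) - (μ/(6*L)) * (F p - F xstar) := by ring
    rw [hgoalr]
    have : (μ/(6*L)) * (F p - F xstar) ≤ (17/150) * (‖g‖^2 / L) := by
      rw [hring]
      linarith
    linarith
  -- rate rewriting and induction
  have hrate : (1 : ℝ) - 1 / (6 * (L / μ)) = 1 - μ/(6*L) := by
    field_simp
  rw [hrate]
  have hr0 : (0:ℝ) ≤ 1 - μ/(6*L) := by
    rw [sub_nonneg, div_le_one (by linarith)]
    linarith
  induction T with
  | zero => simp
  | succ n ih =>
    calc F (xbar (n+1+1)) - F xstar
        ≤ (1 - μ/(6*L)) * (F (xbar (n+1)) - F xstar) := key (n+1) (by omega)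
      _ ≤ (1 - μ/(6*L)) * ((1 - μ/(6*L)) ^ n * (F (xbar 1) - F xstar)) :=
          mul_le_mul_of_nonneg_left ih hr0
      _ = (1 - μ/(6*L)) ^ (n+1) * (F (xbar 1) - F xstar) := by ring
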